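/- Let (Q_E, ρ_{F/E}) be an inverse system, indexed by a directed set, of finitely generated torsion-free modules over ℤ localized away from a finite set of primes, and set Q = lim_E Q_E. Then the sequence 0 → Q → Q̂ → ∏_E (ℚ ⊗ Q̂_E)/(ℚ ⊗ Q_E) is exact, where Q̂ denotes the profinite completion lim_n Q/nQ and the right-hand map is induced by the natural maps Q̂ → Q̂_E. -/

import Mathlib

/-- The multiplication-by-`c` homomorphism on an abelian group. -/
def zsmulHom {A : Type*} [AddCommGroup A] (c : ℤ) : A →+ A where
  toFun a := c • a
  map_zero' := smul_zero c
  map_add' x y := smul_add c x y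

@[simp] lemma zsmulHom_apply {A : Type*} [AddCommGroup A] (c : ℤ) (a : A) :
    zsmulHom c a = c • a := rfl

/-- The subgroup `cA` of an abelian group `A`. -/
def gsub (A : Type*) [AddCommGroup A] (c : ℤ) : AddSubgroup A := (zsmulHom c).range

lemma gsub_le_comap {A B : Type*} [AddCommGroup A] [AddCommGroup B] (f : A →+ B)
    {c d : ℤ} (h : c ∣ d) : gsub A d ≤ (gsub B c).comap f := by
  rintro a ⟨y, rfl⟩
  obtain ⟨k, rfl⟩ := h
  simp only [AddSubgroup.mem_comap]
  exact ⟨k • f y, by rw [zsmulHom_apply, zsmulHom_apply, map_zsmul, mul_smul]⟩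

/-- The completion `lim_i A/(N i)A` of `A` along a family of integers `N`, realised as the
subgroup of compatible families in the product of the quotients `A/(N i)A`, with transition
maps given whenever `N i ∣ N j`. -/
def gcomp (A : Type*) [AddCommGroup A] {ι : Type*} (N : ι → ℤ) :
    AddSubgroup (∀ i, A ⧸ gsub A (N i)) where
  carrier := {x | ∀ (i j : ι) (h : N i ∣ N j),
    QuotientAddGroup.map (gsub A (N j)) (gsub A (N i)) (AddMonoidHom.id A)
      (gsub_le_comap (AddMonoidHom.id A) h) (x j) = x i}
  add_mem' := by
    intro x y hx hy i j h
    simp only [Pi.add_apply, map_add]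
    rw [hx i j h, hy i j h]
  zero_mem' := by
    intro i j h
    simp
  neg_mem' := by
    intro x hx i j h
    simp only [Pi.neg_apply, map_neg]
    rw [hx i j h]


open scoped TensorProduct

/-- The canonical map from a group to its completion along the family `N`. -/
def toComp (A : Type*) [AddCommGroup A] {ι : Type*} (N : ι → ℤ) : A →+ gcomp A N where
  toFun a := ⟨fun _ => QuotientAddGroup.mk a, by
    intro i j h
    simp [QuotientAddGroup.map_mk]⟩
  map_zero' := Subtype.ext (funext fun i => rfl)
  map_add' x y := Subtype.ext (funext fun i => rfl)

lemma map_map_comm {A B : Type*} [AddCommGroup A] [AddCommGroup B] (f : A →+ B)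
    {c d : ℤ} (h : c ∣ d) (q : A ⧸ gsub A d) :
    QuotientAddGroup.map (gsub B d) (gsub B c) (AddMonoidHom.id B)
        (gsub_le_comap (AddMonoidHom.id B) h)
        (QuotientAddGroup.map (gsub A d) (gsub B d) f (gsub_le_comap f dvd_rfl) q) =
      QuotientAddGroup.map (gsub A c) (gsub B c) f (gsub_le_comap f dvd_rfl)
        (QuotientAddGroup.map (gsub A d) (gsub A c) (AddMonoidHom.id A)
          (gsub_le_comap (AddMonoidHom.id A) h) q) := by
  induction q using QuotientAddGroup.induction_on with
  | H a => simp [QuotientAddGroup.map_mk]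

/-- The functorial map on completions induced by a homomorphism `f : A → B`. -/
def compMap {A B : Type*} [AddCommGroup A] [AddCommGroup B] (f : A →+ B) {ι : Type*}
    (N : ι → ℤ) : gcomp A N →+ gcomp B N where
  toFun x := ⟨fun i =>
    QuotientAddGroup.map (gsub A (N i)) (gsub B (N i)) f (gsub_le_comap f dvd_rfl) (x.1 i), by
      intro i j h
      show QuotientAddGroup.map _ _ _ _
          (QuotientAddGroup.map _ _ f (gsub_le_comap f dvd_rfl) (x.1 j)) = _
      rw [map_map_comm f h (x.1 j), x.2 i j h]⟩
  map_zero' := Subtype.ext (funext fun i => map_zero _)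
  map_add' x y := Subtype.ext (funext fun i => map_add _ _ _)

/-- The inverse limit of a projective system of abelian groups, as the subgroup of
compatible families. -/
def limSub {ι : Type*} [Preorder ι] (Q : ι → Type*) [∀ i, AddCommGroup (Q i)]
    (ρ : ∀ i j, i ≤ j → (Q j →+ Q i)) : AddSubgroup (∀ i, Q i) where
  carrier := {x | ∀ (i j : ι) (h : i ≤ j), ρ i j h (x j) = x i}
  add_mem' := by
    intro x y hx hy i j h
    simp only [Pi.add_apply, map_add]
    rw [hx i j h, hy i j h]
  zero_mem' := by intro i j h; simp
  neg_mem' := by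
    intro x hx i j h
    simp only [Pi.neg_apply, map_neg]
    rw [hx i j h]

/-- The family of positive integers, ordered by divisibility, along which profinite
completions are formed. -/
def NN : ℕ+ → ℤ := fun n => (n : ℤ)

/-- The natural map `C → ℚ ⊗_ℤ C`. -/
noncomputable def ratEmb (C : Type*) [AddCommGroup C] : C →ₗ[ℤ] ℚ ⊗[ℤ] C :=
  TensorProduct.mk ℤ ℚ C 1

/-- The image of `ℚ ⊗ A` in `ℚ ⊗ Â` under the natural map induced by `A → Â`. -/
noncomputable def WW (A : Type*) [AddCommGroup A] : Submodule ℤ (ℚ ⊗[ℤ] ↥(gcomp A NN)) :=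
  LinearMap.range (LinearMap.lTensor ℚ (toComp A NN).toIntLinearMap)

set_option synthInstance.maxHeartbeats 1000000
section Helpers

universe v

lemma mem_gsub_iff {A : Type*} [AddCommGroup A] {c : ℤ} {a : A} :
    a ∈ gsub A c ↔ ∃ y, c • y = a := Iff.rfl

lemma krull_inj (S : Finset ℕ) (hS : ∀ p ∈ S, p.Prime)
    (R : Subring ℚ) (hR : R = Subring.closure ((fun p : ℕ => (p : ℚ)⁻¹) '' S))
    (M : Type v) [AddCommGroup M] [Module R M] [Module.Finite R M]
    (htf : ∀ (n : ℤ) (z : M), n • z = 0 → n = 0 ∨ z = 0)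
    (a : M) (h : ∀ n : ℕ+, a ∈ gsub M (NN n)) : a = 0 := by
  set N : ℕ := ∏ p ∈ S, p with hNdef
  have hNpos : 0 < N := Finset.prod_pos fun p hp => (hS p hp).pos
  have hNQ : ((N : ℚ)) ≠ 0 := by positivity
  -- every element of `R` has only `N`-power denominators
  let T : Subring ℚ :=
  { carrier := {x : ℚ | ∃ (b : ℤ) (m : ℕ), x * (N : ℚ) ^ m = b}
    zero_mem' := ⟨0, 0, by simp⟩
    one_mem' := ⟨1, 0, by simp⟩
    add_mem' := by
      rintro x y ⟨b, m, hb⟩ ⟨c, k, hc⟩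
      exact ⟨b * (N : ℤ) ^ k + c * (N : ℤ) ^ m, m + k, by
        push_cast; rw [pow_add, ← hb, ← hc]; ring⟩
    mul_mem' := by
      rintro x y ⟨b, m, hb⟩ ⟨c, k, hc⟩
      exact ⟨b * c, m + k, by push_cast; rw [pow_add, ← hb, ← hc]; ring⟩
    neg_mem' := by
      rintro x ⟨b, m, hb⟩
      exact ⟨-b, m, by push_cast; rw [← hb]; ring⟩ }
  have hsT : (fun p : ℕ => (p : ℚ)⁻¹) '' S ⊆ T := by
    rintro _ ⟨p, hp, rfl⟩
    obtain ⟨k, hk⟩ : p ∣ N := Finset.dvd_prod_of_mem id hp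
    have hp0 : ((p : ℚ)) ≠ 0 := Nat.cast_ne_zero.mpr (hS p hp).pos.ne'
    exact ⟨(k : ℤ), 1, by rw [pow_one, hk]; push_cast; field_simp⟩
  have hdenom : ∀ x : R, ∃ (b : ℤ) (m : ℕ), (x : ℚ) * (N : ℚ) ^ m = b := by
    intro x
    refine Subring.closure_le.mpr hsT ?_
    rw [← hR]
    exact x.2
  -- `R` acts without torsion on `M`
  have Rtf : ∀ (r : R) (z : M), r • z = 0 → r = 0 ∨ z = 0 := by
    intro r z hz
    by_cases hr : r = 0
    · exact Or.inl hr
    obtain ⟨b, m, hb⟩ := hdenom r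
    have hb0 : b ≠ 0 := by
      rintro rfl
      apply hr
      have hb' : (r : ℚ) * (N : ℚ) ^ m = 0 := by exact_mod_cast hb
      rcases mul_eq_zero.mp hb' with h' | h'
      · exact Subtype.ext h'
      · exact absurd h' (pow_ne_zero _ hNQ)
    have key : ((b : ℤ) : R) • z = (((N : ℕ) ^ m : ℕ) : R) • (r • z) := by
      rw [← mul_smul]
      congr 1
      ext
      push_cast
      rw [← hb]; ring
    have hbz : (b : ℤ) • z = 0 := by
      rw [← Int.cast_smul_eq_zsmul R, key, hz, smul_zero]
    rcases htf b z hbz with h' | h'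
    · exact absurd h' hb0
    · exact Or.inr h'
  -- pick a prime not in `S`
  obtain ⟨p, hpge, hp⟩ := Nat.exists_infinite_primes (S.sup id + 1)
  have hpS : p ∉ S := by
    intro hmem
    have h1 : p ≤ S.sup id := by simpa using Finset.le_sup (f := id) hmem
    omega
  have hpu : ¬ IsUnit ((p : ℕ) : R) := by
    intro hu
    obtain ⟨u, hu1⟩ := isUnit_iff_exists_inv.mp hu
    obtain ⟨b, m, hb⟩ := hdenom u
    have hQ : (p : ℚ) * (u : ℚ) = 1 := by
      have := congrArg (fun x : R => (x : ℚ)) hu1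
      push_cast at this
      simpa using this
    have hZ : (p : ℤ) * b = (N : ℤ) ^ m := by
      have : ((p : ℤ) * b : ℚ) = ((N : ℤ) ^ m : ℚ) := by
        push_cast
        rw [← hb, ← mul_assoc, hQ, one_mul]
      exact_mod_cast this
    have hdvd : (p : ℕ) ∣ N ^ m := by
      have : (p : ℤ) ∣ (N : ℤ) ^ m := Dvd.intro b hZ
      exact_mod_cast this
    have hdvdN : p ∣ N := (Nat.Prime.dvd_of_dvd_pow hp) hdvd
    obtain ⟨q, hq, hpq⟩ := (Nat.Prime.prime hp).exists_mem_finset_dvd hdvdN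
    have hpq' : p = q := (Nat.prime_dvd_prime_iff_eq hp (hS q hq)).mp hpq
    exact hpS (hpq' ▸ hq)
  haveI hNoe : IsNoetherianRing R :=
    hR ▸ is_noetherian_subring_closure _ ((S.finite_toSet.image _))
  -- pass to `ULift R` to match universes
  letI R' := ULift.{v} ↥R
  haveI : IsNoetherianRing R' := isNoetherianRing_of_ringEquiv ↥R ULift.ringEquiv.symm
  haveI : Module.Finite R' M := Module.Finite.of_restrictScalars_finite ↥R _ _
  set I : Ideal R' := Ideal.span {ULift.up ((p : ℕ) : R)} with hI
  have hInetop : I ≠ ⊤ := by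
    intro htop
    have hu := Ideal.span_singleton_eq_top.mp htop
    exact hpu (hu.map ULift.ringEquiv)
  have hmem : a ∈ (⨅ k : ℕ, I ^ k • ⊤ : Submodule R' M) := by
    rw [Submodule.mem_iInf]
    intro k
    obtain ⟨y, hy⟩ := h ⟨p ^ k, pow_pos hp.pos k⟩
    have hy' : (ULift.up ((p : ℕ) : R)) ^ k • y = a := by
      rw [← hy]
      show (((p : ℕ) : R)) ^ k • y = ((((p : ℕ) ^ k : ℕ) : ℤ)) • y
      rw [← Int.cast_smul_eq_zsmul R]
      push_cast
      rfl
    rw [hI, Ideal.span_singleton_pow, ← hy']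
    exact Submodule.smul_mem_smul (Ideal.mem_span_singleton_self _) trivial
  obtain ⟨r, hr⟩ := (Ideal.mem_iInf_smul_pow_eq_bot_iff I a).mp hmem
  have h1 : (((1 : R') - r).down : ↥R) • a = 0 := by
    show ((1 : R') - (r : R')) • a = 0
    rw [sub_smul, one_smul, hr, sub_self]
  rcases Rtf _ _ h1 with h' | h'
  · exfalso
    apply hInetop
    rw [Ideal.eq_top_iff_one]
    have h2 : (1 : R') = r := by
      have : ((1 : R') - r) = 0 := ULift.ext _ _ (by exact h')
      exact sub_eq_zero.mp this
    exact h2 ▸ (r : I).2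
  · exact h'

end Helpers
section Helpers2

variable {A B C : Type*} [AddCommGroup A] [AddCommGroup B] [AddCommGroup C]

lemma ratEmb_eq_zero {z : A} (h : ratEmb A z = 0) :
    ∃ n : ℤ, n ≠ 0 ∧ n • z = 0 := by
  haveI : IsLocalizedModule (nonZeroDivisors ℤ) (ratEmb A) :=
    (isLocalizedModule_iff_isBaseChange (nonZeroDivisors ℤ) ℚ _).mpr
      (TensorProduct.isBaseChange ℤ A ℚ)
  obtain ⟨s, hs⟩ := (IsLocalizedModule.eq_zero_iff (nonZeroDivisors ℤ) (ratEmb A)).mp h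
  exact ⟨(s : ℤ), nonZeroDivisors.coe_ne_zero s, by simpa [Submonoid.smul_def] using hs⟩

open scoped TensorProduct in
lemma ratEmb_surj (y : ℚ ⊗[ℤ] A) :
    ∃ (n : ℤ) (z : A), n ≠ 0 ∧ n • y = ratEmb A z := by
  haveI : IsLocalizedModule (nonZeroDivisors ℤ) (ratEmb A) :=
    (isLocalizedModule_iff_isBaseChange (nonZeroDivisors ℤ) ℚ _).mpr
      (TensorProduct.isBaseChange ℤ A ℚ)
  obtain ⟨⟨z, s⟩, hs⟩ := IsLocalizedModule.surj (nonZeroDivisors ℤ) (ratEmb A) y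
  exact ⟨(s : ℤ), z, nonZeroDivisors.coe_ne_zero s, by simpa [Submonoid.smul_def] using hs⟩

variable {ι : Type*} {N : ι → ℤ}

lemma gcomp_coe_smul (d : ℤ) (x : gcomp A N) (i : ι) :
    ((d • x : gcomp A N) : ∀ i, A ⧸ gsub A (N i)) i
      = d • ((x : ∀ i, A ⧸ gsub A (N i)) i) := by
  have := map_zsmul (gcomp A N).subtype d x
  exact congrFun this i

lemma toComp_coe (a : A) (i : ι) :
    ((toComp A N a : gcomp A N) : ∀ i, A ⧸ gsub A (N i)) i = QuotientAddGroup.mk a := rfl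

lemma toComp_eq_zero {a : A} (h : toComp A N a = 0) (i : ι) : a ∈ gsub A (N i) :=
  (QuotientAddGroup.eq_zero_iff a).mp (congrFun (congrArg Subtype.val h) i)

lemma compMap_coe (f : A →+ B) (x : gcomp A N) (i : ι) :
    ((compMap f N x : gcomp B N) : ∀ i, B ⧸ gsub B (N i)) i
      = QuotientAddGroup.map (gsub A (N i)) (gsub B (N i)) f (gsub_le_comap f dvd_rfl)
          ((x : ∀ i, A ⧸ gsub A (N i)) i) := rfl

lemma compMap_toComp (f : A →+ B) (a : A) :
    compMap f N (toComp A N a) = toComp B N (f a) :=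
  Subtype.ext (funext fun i => QuotientAddGroup.map_mk _ _ _ _ _)

lemma compMap_comp (f : B →+ C) (g : A →+ B) (x : gcomp A N) :
    compMap (f.comp g) N x = compMap f N (compMap g N x) := by
  refine Subtype.ext (funext fun i => ?_)
  obtain ⟨u, hu⟩ := QuotientAddGroup.mk_surjective ((x : ∀ i, A ⧸ gsub A (N i)) i)
  rw [compMap_coe, compMap_coe, compMap_coe, ← hu]
  simp [QuotientAddGroup.map_mk]

/-- torsion-freeness of the completion plus descent of divisible elements -/
lemma comp_divide {M : Type*} [AddCommGroup M]
    (htf : ∀ (n : ℤ) (z : M), n • z = 0 → n = 0 ∨ z = 0)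
    (x : gcomp M NN) (d : ℤ) (hd : d ≠ 0) (a : M)
    (h : d • x = toComp M NN a) : ∃ b : M, toComp M NN b = x := by
  wlog hdpos : 0 < d generalizing d a
  · refine this (-d) (neg_ne_zero.mpr hd) (-a) ?_ (by omega)
    rw [neg_smul, h, map_neg]
  set e : ℕ+ := ⟨d.toNat, by omega⟩ with hedef
  have he : ((e : ℕ) : ℤ) = d := by simp [hedef, Int.toNat_of_nonneg hdpos.le]
  -- extract a square root `b` of `a` for division by `d`
  obtain ⟨y, hy⟩ := QuotientAddGroup.mk_surjective ((x : ∀ n, M ⧸ gsub M (NN n)) e)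
  have hcomp : d • ((x : ∀ n, M ⧸ gsub M (NN n)) e) = QuotientAddGroup.mk a := by
    rw [← gcomp_coe_smul, h, toComp_coe]
  rw [← hy] at hcomp
  have hcomp' : (QuotientAddGroup.mk (d • y) : M ⧸ gsub M (NN e)) = QuotientAddGroup.mk a := by
    rw [← hcomp]
    exact map_zsmul (QuotientAddGroup.mk' (gsub M (NN e))) d y
  obtain ⟨z, hz⟩ : d • y - a ∈ gsub M (NN e) := by
    have := (QuotientAddGroup.eq (s := gsub M (NN e))).mp hcomp'
    simpa [neg_add_eq_sub] using (gsub M (NN e)).neg_mem this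
  simp only [zsmulHom_apply] at hz
  have hNNe : NN e = d := he
  rw [hNNe] at hz
  have ha : a = d • (y - z) := by rw [smul_sub, hz]; abel
  refine ⟨y - z, ?_⟩
  -- now show that `x - toComp (y - z)` vanishes, using torsion-freeness
  set w : gcomp M NN := x - toComp M NN (y - z) with hw
  have hdw : d • w = 0 := by
    rw [hw, smul_sub, h, ← map_zsmul, ← ha, sub_self]
  have hwz : w = 0 := by
    refine Subtype.ext (funext fun m => ?_)
    obtain ⟨u, hu⟩ := QuotientAddGroup.mk_surjective ((w : ∀ n, M ⧸ gsub M (NN n)) (e * m))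
    have hdvd : NN m ∣ NN (e * m) := ⟨(e : ℤ), by simp only [NN]; push_cast; ring⟩
    have hcompat := w.2 m (e * m) hdvd
    have hdu : (QuotientAddGroup.mk (d • u) : M ⧸ gsub M (NN (e * m))) = 0 := by
      have h0 : d • ((w : ∀ n, M ⧸ gsub M (NN n)) (e * m)) = 0 := by
        rw [← gcomp_coe_smul, hdw]; rfl
      rw [← hu] at h0
      rw [← h0]
      exact map_zsmul (QuotientAddGroup.mk' (gsub M (NN (e * m)))) d u
    obtain ⟨v, hv⟩ := (QuotientAddGroup.eq_zero_iff _).mp hdu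
    simp only [zsmulHom_apply] at hv
    have hv' : d • ((m : ℤ) • v) = d • u := by
      rw [← hv]
      show d • ((m : ℤ) • v) = NN (e * m) • v
      have : NN (e * m) = d * (m : ℤ) := by simp only [NN]; rw [← he]; push_cast; ring
      rw [this, mul_smul]
    have humem : u ∈ gsub M (NN m) := by
      rcases htf d ((m : ℤ) • v - u) (by rw [smul_sub, hv', sub_self]) with h' | h'
      · exact absurd h' hd
      · exact ⟨v, by simpa [NN] using sub_eq_zero.mp h'⟩
    have hum : ((w : ∀ n, M ⧸ gsub M (NN n)) m) = 0 := by
      rw [← hcompat, ← hu, QuotientAddGroup.map_mk]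
      simpa [QuotientAddGroup.eq_zero_iff] using humem
    exact hum
  have : toComp M NN (y - z) = x := by
    have := sub_eq_zero.mp hwz
    exact this.symm
  exact this

end Helpers2
lemma ratEmb_natural {A B : Type*} [AddCommGroup A] [AddCommGroup B] (g : A →+ B) (a : A) :
    LinearMap.lTensor ℚ g.toIntLinearMap (ratEmb A a) = ratEmb B (g a) := by
  show LinearMap.lTensor ℚ g.toIntLinearMap ((1:ℚ) ⊗ₜ a) = (1:ℚ) ⊗ₜ g a
  exact LinearMap.lTensor_tmul ..

lemma coe_zsmul {G : Type*} [AddCommGroup G] (H : AddSubgroup G) (c : ℤ) (w : H) :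
    ((c • w : H) : G) = c • (w : G) := by exact map_zsmul H.subtype c w
/-- Let `(Q_E, ρ)` be an inverse system, over a directed index set, of finitely generated
torsion-free modules over `ℤ_S`, and `Q = lim_E Q_E`. Then the sequence
`0 → Q → Q̂ → ∏_E (ℚ ⊗ Q̂_E)/(ℚ ⊗ Q_E)` is exact, where `Q̂ = lim_n Q/nQ` is the profinite
completion and the right-hand map is induced by the natural maps `Q̂ → Q̂_E`. -/
theorem stmt12 {ι : Type*} [Preorder ι] [IsDirected ι (· ≤ ·)] [Nonempty ι]
    (S : Finset ℕ) (hS : ∀ p ∈ S, p.Prime)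
    (R : Subring ℚ) (hR : R = Subring.closure ((fun p : ℕ => (p : ℚ)⁻¹) '' S))
    (Q : ι → Type*) [∀ i, AddCommGroup (Q i)] [∀ i, Module R (Q i)]
    [∀ i, Module.Finite R (Q i)]
    (htf : ∀ (i : ι) (n : ℤ) (z : Q i), n • z = 0 → n = 0 ∨ z = 0)
    (ρ : ∀ i j, i ≤ j → (Q j →ₗ[R] Q i))
    (hρrefl : ∀ i x, ρ i i le_rfl x = x)
    (hρtrans : ∀ i j k (h1 : i ≤ j) (h2 : j ≤ k) (x : Q k),
      ρ i j h1 (ρ j k h2 x) = ρ i k (h1.trans h2) x) :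
    Function.Injective
      (toComp (↥(limSub Q (fun i j h => (ρ i j h).toAddMonoidHom))) NN) ∧
    ∀ x : ↥(gcomp (↥(limSub Q (fun i j h => (ρ i j h).toAddMonoidHom))) NN),
      (∀ i : ι,
        (Submodule.Quotient.mk
            (ratEmb _
              ((compMap ((Pi.evalAddMonoidHom Q i).comp
                  (limSub Q (fun i j h => (ρ i j h).toAddMonoidHom)).subtype) NN) x)) :
          (ℚ ⊗[ℤ] ↥(gcomp (Q i) NN)) ⧸ WW (Q i)) = 0) ↔
      x ∈ (toComp (↥(limSub Q (fun i j h => (ρ i j h).toAddMonoidHom))) NN).range := by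
  classical
  have hcomp_inj : ∀ (i : ι) (a : Q i), (∀ n : ℕ+, a ∈ gsub (Q i) (NN n)) → a = 0 :=
    fun i a ha => krull_inj S hS R hR (Q i) (htf i) a ha
  set L := limSub Q (fun i j h => (ρ i j h).toAddMonoidHom) with hLdef
  have htcinj : ∀ (i : ι) (a : Q i), toComp (Q i) NN a = 0 → a = 0 :=
    fun i a ha => hcomp_inj i a (fun n => toComp_eq_zero ha n)
  constructor
  · rw [injective_iff_map_eq_zero]
    intro q hq
    refine Subtype.ext (funext fun i => ?_)
    refine hcomp_inj i ((q : ∀ i, Q i) i) fun n => ?_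
    obtain ⟨y, hy⟩ := toComp_eq_zero hq n
    simp only [zsmulHom_apply] at hy
    refine ⟨(y : ∀ i, Q i) i, ?_⟩
    simp only [zsmulHom_apply]
    have hcoe := congrFun (map_zsmul L.subtype (NN n) y) i
    rw [hy] at hcoe
    exact hcoe.symm
  · intro x
    constructor
    · intro hx
      -- Step 1: find `b i` with `toComp (b i) = x^i` for each `i`
      have hbex : ∀ i : ι, ∃ bi : Q i, toComp (Q i) NN bi
          = compMap ((Pi.evalAddMonoidHom Q i).comp L.subtype) NN x := by
        intro i
        have h0 := hx i
        rw [Submodule.Quotient.mk_eq_zero] at h0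
        obtain ⟨t, ht⟩ := h0
        obtain ⟨n, z, hn, hz⟩ := ratEmb_surj t
        set xi := compMap ((Pi.evalAddMonoidHom Q i).comp L.subtype) NN x with hxi
        have h1 : ratEmb _ (n • xi - toComp (Q i) NN z) = 0 := by
          rw [map_sub, map_zsmul, ← ratEmb_natural (toComp (Q i) NN) z, ← hz, map_zsmul,
            show (LinearMap.lTensor ℚ (toComp (Q i) NN).toIntLinearMap) t = ratEmb _ xi from ht,
            sub_self]
        obtain ⟨k, hk, hkz⟩ := ratEmb_eq_zero h1
        rw [smul_sub] at hkz
        have h2 : (k * n) • xi = toComp (Q i) NN (k • z) := by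
          rw [mul_smul, map_zsmul]
          exact sub_eq_zero.mp hkz
        exact comp_divide (htf i) xi (k * n) (mul_ne_zero hk hn) (k • z) h2
      choose b hb using hbex
      -- Step 2: naturality identifies the `x^i` under the transition maps
      have hnatx : ∀ (i j : ι) (hij : i ≤ j),
          compMap (ρ i j hij).toAddMonoidHom NN
              (compMap ((Pi.evalAddMonoidHom Q j).comp L.subtype) NN x)
            = compMap ((Pi.evalAddMonoidHom Q i).comp L.subtype) NN x := by
        intro i j hij
        have hfe : (Pi.evalAddMonoidHom Q i).comp L.subtype
            = (ρ i j hij).toAddMonoidHom.comp ((Pi.evalAddMonoidHom Q j).comp L.subtype) :=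
          AddMonoidHom.ext fun q => (q.2 i j hij).symm
        rw [hfe]
        simp only [compMap_comp]
      -- Step 3: the `b i` are compatible
      have hcompat : ∀ (i j : ι) (hij : i ≤ j), (ρ i j hij).toAddMonoidHom (b j) = b i := by
        intro i j hij
        have h3 : toComp (Q i) NN ((ρ i j hij).toAddMonoidHom (b j) - b i) = 0 := by
          rw [map_sub, ← compMap_toComp, hb j, hb i, hnatx i j hij, sub_self]
        have := htcinj i _ h3
        exact sub_eq_zero.mp this
      refine ⟨⟨b, hcompat⟩, ?_⟩
      -- Step 4: `toComp b = x`
      refine Subtype.ext (funext fun n => ?_)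
      obtain ⟨y, hyy⟩ := QuotientAddGroup.mk_surjective ((x : ∀ n, ↥L ⧸ gsub ↥L (NN n)) n)
      show (QuotientAddGroup.mk (⟨b, hcompat⟩ : ↥L) : ↥L ⧸ gsub ↥L (NN n))
          = (x : ∀ n, ↥L ⧸ gsub ↥L (NN n)) n
      rw [← hyy]
      symm
      rw [QuotientAddGroup.eq]
      have hzex : ∀ i : ι, ∃ zi : Q i, NN n • zi = b i - (y : ∀ i, Q i) i := by
        intro i
        have h4 := congrFun (congrArg Subtype.val (hb i)) n
        rw [compMap_coe, ← hyy, QuotientAddGroup.map_mk] at h4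
        have h5 : (QuotientAddGroup.mk ((y : ∀ i, Q i) i) : Q i ⧸ gsub (Q i) (NN n))
            = QuotientAddGroup.mk (b i) := h4.symm
        obtain ⟨zi, hzi⟩ := (QuotientAddGroup.eq).mp h5
        simp only [zsmulHom_apply] at hzi
        exact ⟨zi, by rw [hzi]; abel⟩
      choose z hz using hzex
      have hNNn : NN n ≠ 0 := by
        simp only [NN]
        exact_mod_cast n.pos.ne'
      have hzmem : ∀ (i j : ι) (hij : i ≤ j), (ρ i j hij).toAddMonoidHom (z j) = z i := by
        intro i j hij
        have h6 : NN n • ((ρ i j hij).toAddMonoidHom (z j) - z i) = 0 := by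
          rw [smul_sub, ← map_zsmul, hz j, hz i, map_sub, hcompat i j hij]
          have h7 := y.2 i j hij
          rw [h7]
          abel
        rcases htf i (NN n) _ h6 with h' | h'
        · exact absurd h' hNNn
        · exact sub_eq_zero.mp h'
      refine ⟨(⟨z, hzmem⟩ : ↥L), ?_⟩
      simp only [zsmulHom_apply]
      refine Subtype.ext ?_
      rw [coe_zsmul, AddSubgroup.coe_add, AddSubgroup.coe_neg]
      funext i
      simp only [Pi.smul_apply, Pi.add_apply, Pi.neg_apply]
      rw [hz i]
      show b i - (y : ∀ i, Q i) i = -(y : ∀ i, Q i) i + b i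
      abel
    · rintro ⟨q, rfl⟩ i
      rw [compMap_toComp, Submodule.Quotient.mk_eq_zero]
      exact ⟨ratEmb (Q i) (((Pi.evalAddMonoidHom Q i).comp L.subtype) q),
        ratEmb_natural (toComp (Q i) NN) _⟩
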